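/- Let \(\mathcal{H}\) be an abelian length category with a torsion pair \((\mathcal{X},\mathcal{Y})\). Define \(\widecheck{\mathcal{X}} = \{X \in \mathcal{H} \mid \text{every morphism } f : X \to Y \text{ with } Y\in\mathcal{Y} \text{ has } \mathrm{coker}(f)\in\mathcal{Y}\}\). Then \(\widecheck{\mathcal{X}}\) contains \(\mathcal{X}\) and is a torsion class in \(\mathcal{H}\), i.e. \(\widecheck{\mathcal{X}}\) is closed under quotients and extensions. -/

import Mathlib

open CategoryTheory Limits

universe v u

namespace Mut

variable {C : Type u} [Category.{v} C]

/-- A class of objects closed under isomorphisms. -/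
def IsoClosed (S : Set C) : Prop := ∀ ⦃X Y : C⦄, (X ≅ Y) → X ∈ S → Y ∈ S

/-- `g : E ⟶ X` is an `M`-precover of `X`. -/
def IsPrecover (M : Set C) {E X : C} (g : E ⟶ X) : Prop :=
  E ∈ M ∧ ∀ ⦃E' : C⦄ (f : E' ⟶ X), E' ∈ M → ∃ h : E' ⟶ E, h ≫ g = f

/-- `g : E ⟶ X` is an `M`-cover of `X`. -/
def IsCover (M : Set C) {E X : C} (g : E ⟶ X) : Prop :=
  IsPrecover M g ∧ ∀ h : E ⟶ E, h ≫ g = g → IsIso h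

/-- `g : X ⟶ E` is an `M`-preenvelope of `X`. -/
def IsPreenvelope (M : Set C) {X E : C} (g : X ⟶ E) : Prop :=
  E ∈ M ∧ ∀ ⦃E' : C⦄ (f : X ⟶ E'), E' ∈ M → ∃ h : E ⟶ E', g ≫ h = f

/-- `g : X ⟶ E` is an `M`-envelope of `X`. -/
def IsEnvelope (M : Set C) {X E : C} (g : X ⟶ E) : Prop :=
  IsPreenvelope M g ∧ ∀ h : E ⟶ E, g ≫ h = g → IsIso h

section Abelian

variable [Abelian C]

/-- `0 ⟶ A ⟶ X ⟶ B ⟶ 0` is a short exact sequence. -/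
def SES {A X B : C} (i : A ⟶ X) (p : X ⟶ B) : Prop :=
  ∃ w : i ≫ p = 0, (ShortComplex.mk i p w).ShortExact

/-- A class of objects closed under extensions. -/
def ClosedUnderExtensions (S : Set C) : Prop :=
  ∀ ⦃A X B : C⦄ (i : A ⟶ X) (p : X ⟶ B), SES i p → A ∈ S → B ∈ S → X ∈ S

/-- A torsion pair `(T, F)` in an abelian category: strict (iso-closed) full
subcategories with no nonzero maps from `T` to `F`, such that every object is an
extension of an object of `F` by an object of `T`. -/
structure IsTorsionPair (T F : Set C) : Prop where
  isoClosed_torsion : IsoClosed T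
  isoClosed_free : IsoClosed F
  hom_zero : ∀ ⦃X Y : C⦄, X ∈ T → Y ∈ F → ∀ f : X ⟶ Y, f = 0
  exists_ses : ∀ X : C, ∃ (A B : C) (i : A ⟶ X) (p : X ⟶ B),
    A ∈ T ∧ B ∈ F ∧ SES i p

/-- `M ⋆ N`: objects that are extensions of an object of `N` by an object of `M`. -/
def star (M N : Set C) : Set C :=
  {X | ∃ (A B : C) (i : A ⟶ X) (p : X ⟶ B), A ∈ M ∧ B ∈ N ∧ SES i p}

/-- `X` has a filtration `0 = X₀ ⊆ X₁ ⊆ X₂ ⊆ X₃ = X` with `X₁ ∈ U`,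
`X₂/X₁ ∈ S` and `X/X₂ ∈ F`. -/
def HasFiltration (U S F : Set C) (X : C) : Prop :=
  ∃ (X₁ X₂ : C) (a : X₁ ⟶ X₂) (b : X₂ ⟶ X), Mono a ∧ Mono b ∧
    X₁ ∈ U ∧ cokernel a ∈ S ∧ cokernel b ∈ F

/-- A filtration triple `(U, S, F)` in an abelian category. -/
structure IsFiltrationTriple (U S F : Set C) : Prop where
  isoClosed_U : IsoClosed U
  isoClosed_S : IsoClosed S
  isoClosed_F : IsoClosed F
  hom_US : ∀ ⦃X Y : C⦄, X ∈ U → Y ∈ S → ∀ f : X ⟶ Y, f = 0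
  hom_UF : ∀ ⦃X Y : C⦄, X ∈ U → Y ∈ F → ∀ f : X ⟶ Y, f = 0
  hom_SF : ∀ ⦃X Y : C⦄, X ∈ S → Y ∈ F → ∀ f : X ⟶ Y, f = 0
  filt : ∀ X : C, HasFiltration U S F X

/-- A wide subcategory: an iso-closed class closed under kernels, cokernels
and extensions. -/
def IsWide (S : Set C) : Prop :=
  IsoClosed S ∧ ClosedUnderExtensions S ∧
    (∀ ⦃X Y : C⦄ (f : X ⟶ Y), X ∈ S → Y ∈ S → kernel f ∈ S) ∧
    (∀ ⦃X Y : C⦄ (f : X ⟶ Y), X ∈ S → Y ∈ S → cokernel f ∈ S)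

end Abelian

section AuxLemmas

variable [Abelian C]

/-- `cokernel (f ≫ cokernel.π (i ≫ f)) ≅ cokernel f`. -/
noncomputable def cokerCompPiIso {A X Y : C} (i : A ⟶ X) (f : X ⟶ Y) :
    cokernel (f ≫ cokernel.π (i ≫ f)) ≅ cokernel f where
  hom := cokernel.desc _ (cokernel.desc (i ≫ f) (cokernel.π f)
      (by rw [Category.assoc, cokernel.condition, comp_zero])) (by
    rw [Category.assoc, cokernel.π_desc, cokernel.condition])
  inv := cokernel.desc f (cokernel.π (i ≫ f) ≫ cokernel.π _) (by
    rw [← Category.assoc, cokernel.condition])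
  hom_inv_id := by
    apply coequalizer.hom_ext
    rw [cokernel.π_desc_assoc, Category.comp_id]
    apply (cancel_epi (cokernel.π (i ≫ f))).mp
    rw [cokernel.π_desc_assoc, cokernel.π_desc]
  inv_hom_id := by
    apply coequalizer.hom_ext
    rw [cokernel.π_desc_assoc, Category.comp_id, Category.assoc,
      cokernel.π_desc, cokernel.π_desc]

end AuxLemmas


/-- The class `∨X` of objects all of whose cokernels of maps to `𝒴` stay in `𝒴`. -/
def torsCheck [Abelian C] (𝒴 : Set C) : Set C :=
  {A | ∀ ⦃B : C⦄ (f : A ⟶ B), B ∈ 𝒴 → cokernel f ∈ 𝒴}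

/-- In an abelian length category, for a torsion pair `(𝒳, 𝒴)`, the class
`∨𝒳 = torsCheck 𝒴` contains `𝒳` and is a torsion class (closed under quotients
and extensions). -/
theorem statement_6 [Abelian C]
    (hlen : ∀ X : C, IsNoetherianObject X ∧ IsArtinianObject X)
    {𝒳 𝒴 : Set C} (h : IsTorsionPair 𝒳 𝒴) :
    𝒳 ⊆ torsCheck 𝒴 ∧
    (∀ ⦃A B : C⦄ (p : A ⟶ B), Epi p → A ∈ torsCheck 𝒴 → B ∈ torsCheck 𝒴) ∧
    ClosedUnderExtensions (torsCheck 𝒴) := by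
  refine ⟨?_, ?_, ?_⟩
  · intro A hA B f hB
    have hf : f = 0 := h.hom_zero hA hB f
    subst hf
    exact h.isoClosed_free (cokernelZeroIsoTarget).symm hB
  · intro A B p hp hA Y f hY
    exact h.isoClosed_free (cokernelEpiComp p f) (hA (p ≫ f) hY)
  · rintro A X B i p ⟨w, hse⟩ hA hB Y f hY
    have hepi : Epi p := hse.epi_g
    -- cokernel of `i ≫ f` into `Y ∈ 𝒴`
    set q : Y ⟶ cokernel (i ≫ f) := cokernel.π (i ≫ f) with hq
    have hC : cokernel (i ≫ f) ∈ 𝒴 := hA (i ≫ f) hY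
    -- `f ≫ q` kills `i`, hence factors through `p`
    have hkill : i ≫ (f ≫ q) = 0 := by
      rw [← Category.assoc, hq, cokernel.condition]
    obtain ⟨g, hg⟩ := hse.exact.desc' (f ≫ q) hkill
    -- `cokernel g ∈ 𝒴` since `B ∈ torsCheck 𝒴`
    have hcg : cokernel g ∈ 𝒴 := hB g hC
    have e1 : cokernel (p ≫ g) ≅ cokernel g := cokernelEpiComp p g
    have e2 : cokernel (f ≫ q) ≅ cokernel f := cokerCompPiIso i f
    have e3 : cokernel (f ≫ q) ≅ cokernel (p ≫ g) := cokernelIsoOfEq hg.symm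
    exact h.isoClosed_free (e1.symm ≪≫ e3.symm ≪≫ e2) hcg

end Mut
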